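/- The discounted value function h_α(x) := Σ_{t=0}^∞ α^t 𝔼[ c(F_t(x, ·)) ] is well defined (the series converges absolutely), h_α is differentiable on ℝ^d, and its gradient admits the representation ∇h_α(x) = Σ_{t=0}^∞ α^t 𝔼[ S_t(x, ·)ᵀ ∇c(F_t(x, ·)) ], with the uniform bound ‖∇h_α(x)‖ ≤ C / (1 − αL) for all x. -/

import Mathlib

open MeasureTheory

/-- The random flow driven by noise `N`: `rflow a N 0 x ω = x`,
`rflow a N (s+1) x ω = a (rflow a N s x ω) (N (s+1) ω)`. -/
def rflow {E M Ω : Type*} (a : E → M → E) (N : ℕ → Ω → M) : ℕ → E → Ω → E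
  | 0 => fun x _ => x
  | s + 1 => fun x ω => a (rflow a N s x ω) (N (s + 1) ω)

set_option maxHeartbeats 1600000 in
open InnerProductSpace in
open scoped RealInnerProductSpace in
/-- The discounted value function `h_α(x) = ∑_t α^t 𝔼[c(F_t(x,·))]` is
well defined (absolutely convergent series), differentiable, with
`∇h_α(x) = ∑_t α^t 𝔼[S_t(x,·)ᵀ ∇c(F_t(x,·))]` and `‖∇h_α(x)‖ ≤ C/(1 − αL)`. -/
theorem gradient_of_discounted_value_representation
    {Ω : Type*} [MeasurableSpace Ω] (ℙ : Measure Ω) [IsProbabilityMeasure ℙ]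
    (d m : ℕ)
    (N : ℕ → Ω → Fin m → ℝ) (hN : ∀ s, Measurable (N s))
    (L : ℝ)
    (a : EuclideanSpace ℝ (Fin d) → (Fin m → ℝ) → EuclideanSpace ℝ (Fin d))
    (hameas : Measurable fun p : EuclideanSpace ℝ (Fin d) × (Fin m → ℝ) => a p.1 p.2)
    (haC1 : ∀ n, ContDiff ℝ 1 (fun x => a x n))
    (hDmeas : Measurable fun p : EuclideanSpace ℝ (Fin d) × (Fin m → ℝ) =>
      fderiv ℝ (fun x => a x p.2) p.1)
    (hL : ∀ x n, ‖fderiv ℝ (fun y => a y n) x‖ ≤ L)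
    (c : EuclideanSpace ℝ (Fin d) → ℝ) (hc : ContDiff ℝ 1 c)
    (B : ℝ) (hcB : ∀ y, |c y| ≤ B)
    (C : ℝ) (hcC : ∀ y, ‖gradient c y‖ ≤ C)
    (α : ℝ) (hα : α ∈ Set.Ioo (0 : ℝ) 1) (hαL : α * L < 1) :
    (∀ x, Summable (fun t : ℕ => |α ^ t * ∫ ω, c (rflow a N t x ω) ∂ℙ|)) ∧
    Differentiable ℝ (fun x => ∑' t : ℕ, α ^ t * ∫ ω, c (rflow a N t x ω) ∂ℙ) ∧
    (∀ x, gradient (fun x => ∑' t : ℕ, α ^ t * ∫ ω, c (rflow a N t x ω) ∂ℙ) x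
      = ∑' t : ℕ, α ^ t • ∫ ω, ContinuousLinearMap.adjoint
          (fderiv ℝ (fun y => rflow a N t y ω) x) (gradient c (rflow a N t x ω)) ∂ℙ) ∧
    ∀ x, ‖gradient (fun x => ∑' t : ℕ, α ^ t * ∫ ω, c (rflow a N t x ω) ∂ℙ) x‖
      ≤ C / (1 - α * L) := by
  classical
  obtain ⟨hα0, hα1⟩ := hα
  have hL0 : (0:ℝ) ≤ L := le_trans (norm_nonneg _) (hL 0 0)
  have hC0 : (0:ℝ) ≤ C := le_trans (norm_nonneg _) (hcC 0)
  have hαL0 : (0:ℝ) ≤ α * L := mul_nonneg hα0.le hL0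
  have hq : Summable fun t : ℕ => (α * L) ^ t := summable_geometric_of_lt_one hαL0 hαL
  have hu : Summable fun t : ℕ => C * (α * L) ^ t := hq.mul_left C
  -- measurability of the flow
  have hFmeas : ∀ t, Measurable fun p : EuclideanSpace ℝ (Fin d) × Ω => rflow a N t p.1 p.2 := by
    intro t
    induction t with
    | zero => exact measurable_fst
    | succ s ih =>
      simp only [rflow]
      exact hameas.comp (ih.prodMk ((hN (s+1)).comp measurable_snd))
  have hFmeasω : ∀ (t : ℕ) (x : EuclideanSpace ℝ (Fin d)), Measurable fun ω => rflow a N t x ω := fun t x =>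
    (hFmeas t).comp (measurable_const.prodMk measurable_id)
  -- differentiability in x
  have haDiff : ∀ n, Differentiable ℝ fun y => a y n := fun n => (haC1 n).differentiable one_ne_zero
  have hFdiff : ∀ (t : ℕ) (ω : Ω), Differentiable ℝ fun y => rflow a N t y ω := by
    intro t
    induction t with
    | zero => intro ω; exact differentiable_id
    | succ s ih =>
      intro ω
      simp only [rflow]
      exact (haDiff (N (s+1) ω)).comp (ih ω)
  have hSrec : ∀ (t : ℕ) (ω : Ω) (x : EuclideanSpace ℝ (Fin d)), fderiv ℝ (fun y => rflow a N (t+1) y ω) x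
      = (fderiv ℝ (fun y => a y (N (t+1) ω)) (rflow a N t x ω)).comp
          (fderiv ℝ (fun y => rflow a N t y ω) x) := by
    intro t ω x
    have := fderiv_comp (𝕜 := ℝ) x ((haDiff (N (t+1) ω)) (rflow a N t x ω)) ((hFdiff t ω) x)
    simpa only [rflow, Function.comp_def] using this
  have hSnorm : ∀ (t : ℕ) (x : EuclideanSpace ℝ (Fin d)) (ω : Ω), ‖fderiv ℝ (fun y => rflow a N t y ω) x‖ ≤ L ^ t := by
    intro t
    induction t with
    | zero =>
      intro x ω
      simp only [rflow, pow_zero]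
      rw [fderiv_id']
      exact ContinuousLinearMap.norm_id_le
    | succ s ih =>
      intro x ω
      rw [hSrec s ω x]
      refine le_trans (ContinuousLinearMap.opNorm_comp_le _ _) ?_
      rw [pow_succ]
      exact mul_le_mul (hL _ _) (ih x ω) (norm_nonneg _) hL0 |>.trans_eq (mul_comm _ _)
  have hSmeas : ∀ (t : ℕ) (x : EuclideanSpace ℝ (Fin d)), Measurable fun ω => fderiv ℝ (fun y => rflow a N t y ω) x := by
    intro t
    induction t with
    | zero =>
      intro x
      have : (fun ω : Ω => fderiv ℝ (fun y : EuclideanSpace ℝ (Fin d) => rflow a N 0 y ω) x)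
          = fun _ : Ω => ContinuousLinearMap.id ℝ (EuclideanSpace ℝ (Fin d)) := by
        funext ω
        exact fderiv_id'
      rw [this]
      exact measurable_const
    | succ s ih =>
      intro x
      have heq : (fun ω : Ω => fderiv ℝ (fun y => rflow a N (s+1) y ω) x)
          = fun ω => (fderiv ℝ (fun y => a y (N (s+1) ω)) (rflow a N s x ω)).comp
              (fderiv ℝ (fun y => rflow a N s y ω) x) := funext fun ω => hSrec s ω x
      rw [heq]
      have h1 : Measurable fun ω => fderiv ℝ (fun y => a y (N (s+1) ω)) (rflow a N s x ω) :=
        hDmeas.comp ((hFmeasω s x).prodMk (hN (s+1)))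
      exact isBoundedBilinearMap_comp.continuous.measurable.comp (h1.prodMk (ih x))
  -- facts about c
  have hcont_fderiv_c : Continuous fun y : EuclideanSpace ℝ (Fin d) => fderiv ℝ c y := hc.continuous_fderiv one_ne_zero
  have hgradc : ∀ y : EuclideanSpace ℝ (Fin d), fderiv ℝ c y = (toDual ℝ (EuclideanSpace ℝ (Fin d))) (gradient c y) := fun y =>
    ((toDual ℝ (EuclideanSpace ℝ (Fin d))).apply_symm_apply (fderiv ℝ c y)).symm
  have hfc_norm : ∀ y : EuclideanSpace ℝ (Fin d), ‖fderiv ℝ c y‖ ≤ C := by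
    intro y
    rw [hgradc y, LinearIsometryEquiv.norm_map]
    exact hcC y
  have hgradc_cont : Continuous fun y : EuclideanSpace ℝ (Fin d) => gradient c y := by
    show Continuous fun y : EuclideanSpace ℝ (Fin d) => (toDual ℝ (EuclideanSpace ℝ (Fin d))).symm (fderiv ℝ c y)
    exact (toDual ℝ (EuclideanSpace ℝ (Fin d))).symm.continuous.comp hcont_fderiv_c
  -- integrability of c ∘ flow
  have hInt : ∀ (t : ℕ) (x : EuclideanSpace ℝ (Fin d)), Integrable (fun ω => c (rflow a N t x ω)) ℙ := by
    intro t x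
    refine Integrable.mono' (integrable_const B)
      ((hc.continuous.measurable.comp (hFmeasω t x)).aestronglyMeasurable)
      (ae_of_all _ fun ω => ?_)
    rw [Real.norm_eq_abs]
    exact hcB _
  -- the fderiv-valued integrand
  have hDnorm : ∀ (t : ℕ) (x : EuclideanSpace ℝ (Fin d)) (ω : Ω),
      ‖(fderiv ℝ c (rflow a N t x ω)).comp (fderiv ℝ (fun y => rflow a N t y ω) x)‖
        ≤ C * L ^ t := fun t x ω =>
    le_trans (ContinuousLinearMap.opNorm_comp_le _ _)
      (mul_le_mul (hfc_norm _) (hSnorm t x ω) (norm_nonneg _) hC0)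
  have hDmeasω : ∀ (t : ℕ) (x : EuclideanSpace ℝ (Fin d)), Measurable fun ω =>
      (fderiv ℝ c (rflow a N t x ω)).comp (fderiv ℝ (fun y => rflow a N t y ω) x) := fun t x =>
    isBoundedBilinearMap_comp.continuous.measurable.comp
      ((hcont_fderiv_c.measurable.comp (hFmeasω t x)).prodMk (hSmeas t x))
  have hDint : ∀ (t : ℕ) (x : EuclideanSpace ℝ (Fin d)), Integrable (fun ω =>
      (fderiv ℝ c (rflow a N t x ω)).comp (fderiv ℝ (fun y => rflow a N t y ω) x)) ℙ :=
    fun t x => Integrable.mono' (integrable_const (C * L ^ t))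
      (hDmeasω t x).aestronglyMeasurable (ae_of_all _ (hDnorm t x))
  -- chain rule
  have hcomp : ∀ (t : ℕ) (ω : Ω) (x' : EuclideanSpace ℝ (Fin d)), HasFDerivAt (fun y => c (rflow a N t y ω))
      ((fderiv ℝ c (rflow a N t x' ω)).comp (fderiv ℝ (fun y => rflow a N t y ω) x')) x' :=
    fun t ω x' =>
      (((hc.differentiable one_ne_zero) _).hasFDerivAt).comp x' ((hFdiff t ω x').hasFDerivAt)
  -- derivative of each summand
  have hIderiv : ∀ (t : ℕ) (x : EuclideanSpace ℝ (Fin d)), HasFDerivAt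
      (fun x => α ^ t * ∫ ω, c (rflow a N t x ω) ∂ℙ)
      (α ^ t • ∫ ω, (fderiv ℝ c (rflow a N t x ω)).comp
        (fderiv ℝ (fun y => rflow a N t y ω) x) ∂ℙ) x := by
    intro t x
    have base : HasFDerivAt (fun x => ∫ ω, c (rflow a N t x ω) ∂ℙ)
        (∫ ω, (fderiv ℝ c (rflow a N t x ω)).comp
          (fderiv ℝ (fun y => rflow a N t y ω) x) ∂ℙ) x := by
      apply hasFDerivAt_integral_of_dominated_of_fderiv_le
        (F' := fun x ω => (fderiv ℝ c (rflow a N t x ω)).comp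
          (fderiv ℝ (fun y => rflow a N t y ω) x))
        (bound := fun _ => C * L ^ t) (s := Set.univ) Filter.univ_mem
      · exact Filter.Eventually.of_forall fun x' =>
          ((hc.continuous.measurable.comp (hFmeasω t x')).aestronglyMeasurable)
      · exact hInt t x
      · exact (hDmeasω t x).aestronglyMeasurable
      · exact ae_of_all _ fun ω x' _ => hDnorm t x' ω
      · exact integrable_const _
      · exact ae_of_all _ fun ω x' _ => hcomp t ω x'
    exact base.const_mul (α ^ t)
  -- norm bound for the derivative of each summand
  have hg'norm : ∀ (t : ℕ) (x : EuclideanSpace ℝ (Fin d)), ‖α ^ t • ∫ ω, (fderiv ℝ c (rflow a N t x ω)).comp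
      (fderiv ℝ (fun y => rflow a N t y ω) x) ∂ℙ‖ ≤ C * (α * L) ^ t := by
    intro t x
    rw [norm_smul, Real.norm_eq_abs, abs_of_nonneg (pow_nonneg hα0.le t)]
    have h1 : ‖∫ ω, (fderiv ℝ c (rflow a N t x ω)).comp
        (fderiv ℝ (fun y => rflow a N t y ω) x) ∂ℙ‖ ≤ C * L ^ t := by
      have := norm_integral_le_of_norm_le_const (μ := ℙ) (C := C * L ^ t)
        (ae_of_all _ fun ω => hDnorm t x ω)
      simpa using this
    calc α ^ t * ‖∫ ω, (fderiv ℝ c (rflow a N t x ω)).comp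
          (fderiv ℝ (fun y => rflow a N t y ω) x) ∂ℙ‖
        ≤ α ^ t * (C * L ^ t) := mul_le_mul_of_nonneg_left h1 (pow_nonneg hα0.le t)
      _ = C * (α * L) ^ t := by rw [mul_pow]; ring
  -- summability of the values
  have habs : ∀ x : EuclideanSpace ℝ (Fin d), Summable fun t : ℕ => |α ^ t * ∫ ω, c (rflow a N t x ω) ∂ℙ| := by
    intro x
    refine Summable.of_nonneg_of_le (fun t => abs_nonneg _) (fun t => ?_)
      ((summable_geometric_of_lt_one hα0.le hα1).mul_left B)
    rw [abs_mul, abs_of_nonneg (pow_nonneg hα0.le t)]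
    have h1 : |∫ ω, c (rflow a N t x ω) ∂ℙ| ≤ B := by
      have := norm_integral_le_of_norm_le_const (μ := ℙ) (C := B)
        (f := fun ω => c (rflow a N t x ω))
        (ae_of_all _ fun ω => by rw [Real.norm_eq_abs]; exact hcB _)
      simpa [Real.norm_eq_abs] using this
    have hB0 : (0:ℝ) ≤ B := le_trans (abs_nonneg _) (hcB 0)
    calc α ^ t * |∫ ω, c (rflow a N t x ω) ∂ℙ| ≤ α ^ t * B :=
          mul_le_mul_of_nonneg_left h1 (pow_nonneg hα0.le t)
      _ = B * α ^ t := mul_comm _ _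
  -- derivative of the sum
  have hderiv : ∀ x : EuclideanSpace ℝ (Fin d), HasFDerivAt (fun x => ∑' t : ℕ, α ^ t * ∫ ω, c (rflow a N t x ω) ∂ℙ)
      (∑' t : ℕ, α ^ t • ∫ ω, (fderiv ℝ c (rflow a N t x ω)).comp
        (fderiv ℝ (fun y => rflow a N t y ω) x) ∂ℙ) x := by
    intro x
    exact hasFDerivAt_tsum hu (fun t y => hIderiv t y) (fun t y => hg'norm t y)
      ((habs 0).of_abs) x
  have hSum2 : ∀ x : EuclideanSpace ℝ (Fin d), Summable fun t : ℕ => α ^ t • ∫ ω,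
      (fderiv ℝ c (rflow a N t x ω)).comp (fderiv ℝ (fun y => rflow a N t y ω) x) ∂ℙ :=
    fun x => Summable.of_norm_bounded hu fun t => hg'norm t x
  -- the gradient-valued integrand
  have hGnorm : ∀ (t : ℕ) (x : EuclideanSpace ℝ (Fin d)) (ω : Ω), ‖ContinuousLinearMap.adjoint
      (fderiv ℝ (fun y => rflow a N t y ω) x) (gradient c (rflow a N t x ω))‖ ≤ L ^ t * C := by
    intro t x ω
    refine le_trans (ContinuousLinearMap.le_opNorm _ _) ?_
    rw [LinearIsometryEquiv.norm_map]
    exact mul_le_mul (hSnorm t x ω) (hcC _) (norm_nonneg _) (pow_nonneg hL0 t)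
  have hGmeas : ∀ (t : ℕ) (x : EuclideanSpace ℝ (Fin d)), Measurable fun ω => ContinuousLinearMap.adjoint
      (fderiv ℝ (fun y => rflow a N t y ω) x) (gradient c (rflow a N t x ω)) := by
    intro t x
    have h1 : Measurable fun ω => ContinuousLinearMap.adjoint
        (fderiv ℝ (fun y => rflow a N t y ω) x) :=
      (LinearIsometryEquiv.continuous _).measurable.comp (hSmeas t x)
    have h2 : Measurable fun ω => gradient c (rflow a N t x ω) :=
      hgradc_cont.measurable.comp (hFmeasω t x)
    exact isBoundedBilinearMap_apply.continuous.measurable.comp (h1.prodMk h2)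
  have hGint : ∀ (t : ℕ) (x : EuclideanSpace ℝ (Fin d)), Integrable (fun ω => ContinuousLinearMap.adjoint
      (fderiv ℝ (fun y => rflow a N t y ω) x) (gradient c (rflow a N t x ω))) ℙ :=
    fun t x => Integrable.mono' (integrable_const (L ^ t * C))
      (hGmeas t x).aestronglyMeasurable (ae_of_all _ (hGnorm t x))
  have hGbound : ∀ (t : ℕ) (x : EuclideanSpace ℝ (Fin d)), ‖α ^ t • ∫ ω, ContinuousLinearMap.adjoint
      (fderiv ℝ (fun y => rflow a N t y ω) x) (gradient c (rflow a N t x ω)) ∂ℙ‖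
        ≤ C * (α * L) ^ t := by
    intro t x
    rw [norm_smul, Real.norm_eq_abs, abs_of_nonneg (pow_nonneg hα0.le t)]
    have h1 : ‖∫ ω, ContinuousLinearMap.adjoint
        (fderiv ℝ (fun y => rflow a N t y ω) x) (gradient c (rflow a N t x ω)) ∂ℙ‖
          ≤ L ^ t * C := by
      have := norm_integral_le_of_norm_le_const (μ := ℙ) (C := L ^ t * C)
        (ae_of_all _ fun ω => hGnorm t x ω)
      simpa using this
    calc α ^ t * ‖∫ ω, ContinuousLinearMap.adjoint
          (fderiv ℝ (fun y => rflow a N t y ω) x) (gradient c (rflow a N t x ω)) ∂ℙ‖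
        ≤ α ^ t * (L ^ t * C) := mul_le_mul_of_nonneg_left h1 (pow_nonneg hα0.le t)
      _ = C * (α * L) ^ t := by rw [mul_pow]; ring
  have hsumG : ∀ x : EuclideanSpace ℝ (Fin d), Summable fun t : ℕ => α ^ t • ∫ ω, ContinuousLinearMap.adjoint
      (fderiv ℝ (fun y => rflow a N t y ω) x) (gradient c (rflow a N t x ω)) ∂ℙ :=
    fun x => Summable.of_norm_bounded hu fun t => hGbound t x
  -- pointwise identity
  have hpoint : ∀ (t : ℕ) (x : EuclideanSpace ℝ (Fin d)) (ω : Ω) (u : EuclideanSpace ℝ (Fin d)),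
      ⟪u, ContinuousLinearMap.adjoint (fderiv ℝ (fun y => rflow a N t y ω) x)
        (gradient c (rflow a N t x ω))⟫_ℝ
      = ((fderiv ℝ c (rflow a N t x ω)).comp (fderiv ℝ (fun y => rflow a N t y ω) x)) u := by
    intro t x ω u
    rw [ContinuousLinearMap.adjoint_inner_right, real_inner_comm, ← toDual_apply_apply, ← hgradc]
    rfl
  -- the key identity
  have hkey : ∀ x : EuclideanSpace ℝ (Fin d), (toDual ℝ (EuclideanSpace ℝ (Fin d))) (∑' t : ℕ, α ^ t • ∫ ω, ContinuousLinearMap.adjoint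
      (fderiv ℝ (fun y => rflow a N t y ω) x) (gradient c (rflow a N t x ω)) ∂ℙ)
      = ∑' t : ℕ, α ^ t • ∫ ω, (fderiv ℝ c (rflow a N t x ω)).comp
          (fderiv ℝ (fun y => rflow a N t y ω) x) ∂ℙ := by
    intro x
    apply ContinuousLinearMap.ext
    intro u
    rw [toDual_apply_apply]
    have e1 : ∀ t : ℕ, ⟪α ^ t • ∫ ω, ContinuousLinearMap.adjoint
        (fderiv ℝ (fun y => rflow a N t y ω) x) (gradient c (rflow a N t x ω)) ∂ℙ, u⟫_ℝ
        = α ^ t * ∫ ω, ((fderiv ℝ c (rflow a N t x ω)).comp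
            (fderiv ℝ (fun y => rflow a N t y ω) x)) u ∂ℙ := by
      intro t
      rw [real_inner_smul_left]
      congr 1
      rw [real_inner_comm, ← integral_inner (hGint t x) u]
      exact integral_congr_ae (ae_of_all _ fun ω => hpoint t x ω u)
    have e0 : ⟪∑' t : ℕ, α ^ t • ∫ ω, ContinuousLinearMap.adjoint
        (fderiv ℝ (fun y => rflow a N t y ω) x) (gradient c (rflow a N t x ω)) ∂ℙ, u⟫_ℝ
        = ∑' t : ℕ, α ^ t * ∫ ω, ((fderiv ℝ c (rflow a N t x ω)).comp
            (fderiv ℝ (fun y => rflow a N t y ω) x)) u ∂ℙ := by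
      rw [real_inner_comm]
      rw [show (⟪u, ∑' t : ℕ, α ^ t • ∫ ω, ContinuousLinearMap.adjoint
        (fderiv ℝ (fun y => rflow a N t y ω) x) (gradient c (rflow a N t x ω)) ∂ℙ⟫_ℝ)
        = (innerSL ℝ u) (∑' t : ℕ, α ^ t • ∫ ω, ContinuousLinearMap.adjoint
          (fderiv ℝ (fun y => rflow a N t y ω) x) (gradient c (rflow a N t x ω)) ∂ℙ) from rfl]
      rw [ContinuousLinearMap.map_tsum _ (hsumG x)]
      refine tsum_congr fun t => ?_
      rw [show ((innerSL ℝ u) (α ^ t • ∫ ω, ContinuousLinearMap.adjoint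
        (fderiv ℝ (fun y => rflow a N t y ω) x) (gradient c (rflow a N t x ω)) ∂ℙ))
        = ⟪u, α ^ t • ∫ ω, ContinuousLinearMap.adjoint
          (fderiv ℝ (fun y => rflow a N t y ω) x) (gradient c (rflow a N t x ω)) ∂ℙ⟫_ℝ from rfl]
      rw [real_inner_comm]
      exact e1 t
    rw [e0]
    -- now the right-hand side
    rw [show ((∑' t : ℕ, α ^ t • ∫ ω, (fderiv ℝ c (rflow a N t x ω)).comp
        (fderiv ℝ (fun y => rflow a N t y ω) x) ∂ℙ) u)
      = (ContinuousLinearMap.apply ℝ ℝ u) (∑' t : ℕ, α ^ t • ∫ ω,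
          (fderiv ℝ c (rflow a N t x ω)).comp
            (fderiv ℝ (fun y => rflow a N t y ω) x) ∂ℙ) from rfl]
    rw [ContinuousLinearMap.map_tsum _ (hSum2 x)]
    refine tsum_congr fun t => ?_
    have : (ContinuousLinearMap.apply ℝ ℝ u) (α ^ t • ∫ ω,
        (fderiv ℝ c (rflow a N t x ω)).comp (fderiv ℝ (fun y => rflow a N t y ω) x) ∂ℙ)
        = α ^ t * ((∫ ω, (fderiv ℝ c (rflow a N t x ω)).comp
            (fderiv ℝ (fun y => rflow a N t y ω) x) ∂ℙ) u) := by
      simp [ContinuousLinearMap.smul_apply]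
    rw [this, ContinuousLinearMap.integral_apply (hDint t x)]
  -- gradient representation
  have hgradrep : ∀ x : EuclideanSpace ℝ (Fin d), gradient (fun x => ∑' t : ℕ, α ^ t * ∫ ω, c (rflow a N t x ω) ∂ℙ) x
      = ∑' t : ℕ, α ^ t • ∫ ω, ContinuousLinearMap.adjoint
          (fderiv ℝ (fun y => rflow a N t y ω) x) (gradient c (rflow a N t x ω)) ∂ℙ := by
    intro x
    have hg : HasGradientAt (fun x => ∑' t : ℕ, α ^ t * ∫ ω, c (rflow a N t x ω) ∂ℙ)
        (∑' t : ℕ, α ^ t • ∫ ω, ContinuousLinearMap.adjoint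
          (fderiv ℝ (fun y => rflow a N t y ω) x) (gradient c (rflow a N t x ω)) ∂ℙ) x := by
      rw [hasGradientAt_iff_hasFDerivAt, hkey x]
      exact hderiv x
    exact hg.gradient
  refine ⟨habs, fun x => (hderiv x).differentiableAt, hgradrep, ?_⟩
  intro x
  rw [hgradrep x]
  have hb : ‖∑' t : ℕ, α ^ t • ∫ ω, ContinuousLinearMap.adjoint
      (fderiv ℝ (fun y => rflow a N t y ω) x) (gradient c (rflow a N t x ω)) ∂ℙ‖
      ≤ C * (1 - α * L)⁻¹ := by
    refine tsum_of_norm_bounded ?_ fun t => hGbound t x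
    exact (hasSum_geometric_of_lt_one hαL0 hαL).mul_left C
  rw [div_eq_mul_inv]
  exact hb
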